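/- For σ ∈ (0,1) and λ > 0, the identity (sin(πσ)/π) ∫₀^∞ s^{σ-1} / ((s^σ + λ e^{iπσ})(s^σ + λ e^{-iπσ})) ds = 1/λ holds. -/

import Mathlib

open MeasureTheory Set Complex

lemma arctan_integral (a b : ℝ) (hb : 0 < b) :
    ∫ y in Set.Ioi (0:ℝ), 1 / ((y + a)^2 + b^2)
      = (1/b) * (Real.pi/2 - Real.arctan (a/b)) := by
  have hderiv : ∀ x ∈ Set.Ici (0:ℝ),
      HasDerivAt (fun y : ℝ => (1/b) * Real.arctan ((y + a)/b))
        (1 / ((x + a)^2 + b^2)) x := by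
    intro x _
    have h1 : HasDerivAt (fun y : ℝ => (y + a)/b) (1/b) x := by
      simpa using ((hasDerivAt_id x).add_const a).div_const b
    have h2 := (Real.hasDerivAt_arctan ((x + a)/b)).comp x h1
    have h3 := h2.const_mul (1/b)
    convert h3 using 1
    · rfl
    · rfl
    · rfl
    have hb2 : (0:ℝ) < (x+a)^2 + b^2 := by positivity
    field_simp
    ring
  have hpos : ∀ x ∈ Set.Ioi (0:ℝ), (0:ℝ) ≤ 1 / ((x + a)^2 + b^2) := by
    intro x _; positivity
  have htend : Filter.Tendsto (fun y : ℝ => (1/b) * Real.arctan ((y + a)/b))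
      Filter.atTop (nhds ((1/b) * (Real.pi/2))) := by
    apply Filter.Tendsto.const_mul
    have h1 : Filter.Tendsto (fun y : ℝ => (y + a)/b) Filter.atTop Filter.atTop :=
      (Filter.tendsto_atTop_add_const_right _ a Filter.tendsto_id).atTop_div_const hb
    exact (Real.tendsto_arctan_atTop.mono_right nhdsWithin_le_nhds).comp h1
  have := integral_Ioi_of_hasDerivAt_of_nonneg' hderiv hpos htend
  rw [this]
  simp only [zero_add]
  ring

lemma real_integral (σ l : ℝ) (hσ : σ ∈ Set.Ioo (0 : ℝ) 1) (hl : 0 < l) :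
    ∫ s in Set.Ioi (0:ℝ),
        s ^ (σ - 1) / ((s ^ σ + l * Real.cos (Real.pi * σ))^2 + (l * Real.sin (Real.pi * σ))^2)
      = Real.pi / (l * Real.sin (Real.pi * σ)) := by
  obtain ⟨hσ0, hσ1⟩ := hσ
  have hsin : 0 < Real.sin (Real.pi * σ) := by
    apply Real.sin_pos_of_pos_of_lt_pi
    · positivity
    · nlinarith [Real.pi_pos]
  set c := Real.cos (Real.pi * σ)
  set sn := Real.sin (Real.pi * σ)
  have hb : 0 < l * sn := by positivity
  have key := integral_comp_rpow_Ioi_of_pos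
    (g := fun y : ℝ => 1 / ((y + l * c)^2 + (l * sn)^2)) hσ0
  have h1 : ∫ x in Set.Ioi (0:ℝ),
      (σ * x ^ (σ - 1)) • (1 / ((x ^ σ + l * c)^2 + (l * sn)^2))
      = σ * ∫ x in Set.Ioi (0:ℝ),
        x ^ (σ - 1) / ((x ^ σ + l * c)^2 + (l * sn)^2) := by
    rw [← MeasureTheory.integral_const_mul]
    congr 1; ext x; simp [smul_eq_mul]; ring
  rw [h1, arctan_integral (l*c) (l*sn) hb] at key
  have harct : Real.arctan ((l * c)/(l * sn)) = Real.pi/2 - Real.pi * σ := by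
    have hc : (l * c)/(l * sn) = Real.tan (Real.pi/2 - Real.pi * σ) := by
      rw [Real.tan_pi_div_two_sub]
      rw [Real.tan_eq_sin_div_cos, inv_div]
      rw [mul_div_mul_left _ _ hl.ne']
    rw [hc, Real.arctan_tan]
    · nlinarith [Real.pi_pos]
    · nlinarith [Real.pi_pos]
  rw [harct] at key
  have : σ * ∫ x in Set.Ioi (0:ℝ), x ^ (σ - 1) / ((x ^ σ + l * c)^2 + (l * sn)^2)
      = 1 / (l * sn) * (Real.pi * σ) := by
    rw [key]; ring
  have hσ0' : σ ≠ 0 := hσ0.ne'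
  field_simp at this ⊢
  nlinarith [this]

/-- For `σ ∈ (0,1)` and `λ > 0`,
`(sin(πσ)/π) ∫₀^∞ s^{σ-1} / ((s^σ + λ e^{iπσ})(s^σ + λ e^{-iπσ})) ds = 1/λ`. -/
theorem resolvent_kernel_integral_identity
    (σ l : ℝ) (hσ : σ ∈ Set.Ioo (0 : ℝ) 1) (hl : 0 < l) :
    ((Real.sin (Real.pi * σ) / Real.pi : ℝ) : ℂ) *
      ∫ s in Set.Ioi (0 : ℝ),
        ((s ^ (σ - 1) : ℝ) : ℂ) /
          ((((s ^ σ : ℝ) : ℂ) + (l : ℂ) * Complex.exp (Real.pi * σ * Complex.I)) *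
           (((s ^ σ : ℝ) : ℂ) + (l : ℂ) * Complex.exp (-(Real.pi * σ * Complex.I))))
      = 1 / (l : ℂ) := by
  obtain ⟨hσ0, hσ1⟩ := hσ
  have hsin : 0 < Real.sin (Real.pi * σ) := by
    apply Real.sin_pos_of_pos_of_lt_pi
    · positivity
    · nlinarith [Real.pi_pos]
  have hint : ∀ s : ℝ,
      ((s ^ (σ - 1) : ℝ) : ℂ) /
          ((((s ^ σ : ℝ) : ℂ) + (l : ℂ) * Complex.exp (Real.pi * σ * Complex.I)) *
           (((s ^ σ : ℝ) : ℂ) + (l : ℂ) * Complex.exp (-(Real.pi * σ * Complex.I))))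
      = ((s ^ (σ - 1) / ((s ^ σ + l * Real.cos (Real.pi * σ))^2
            + (l * Real.sin (Real.pi * σ))^2) : ℝ) : ℂ) := by
    intro s
    have he1 : Complex.exp ((Real.pi : ℂ) * (σ : ℂ) * Complex.I)
        = ((Real.cos (Real.pi * σ) : ℝ) : ℂ) + ((Real.sin (Real.pi * σ) : ℝ) : ℂ) * Complex.I := by
      rw [Complex.exp_mul_I, ← Complex.ofReal_mul, ← Complex.ofReal_cos, ← Complex.ofReal_sin]
    have he2 : Complex.exp (-((Real.pi : ℂ) * (σ : ℂ) * Complex.I))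
        = ((Real.cos (Real.pi * σ) : ℝ) : ℂ) - ((Real.sin (Real.pi * σ) : ℝ) : ℂ) * Complex.I := by
      have : -((Real.pi : ℂ) * (σ : ℂ) * Complex.I) = ((-(Real.pi * σ) : ℝ) : ℂ) * Complex.I := by
        push_cast; ring
      rw [this, Complex.exp_mul_I, ← Complex.ofReal_cos, ← Complex.ofReal_sin,
        Real.cos_neg, Real.sin_neg]
      push_cast; ring
    rw [he1, he2, Complex.ofReal_div, Complex.ofReal_add, Complex.ofReal_pow,
      Complex.ofReal_pow, Complex.ofReal_add, Complex.ofReal_mul, Complex.ofReal_mul]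
    congr 1
    linear_combination (-(l:ℂ)^2 * ((Real.sin (Real.pi*σ) : ℝ) : ℂ)^2) * Complex.I_sq
  have hrw : (∫ s in Set.Ioi (0 : ℝ),
        ((s ^ (σ - 1) : ℝ) : ℂ) /
          ((((s ^ σ : ℝ) : ℂ) + (l : ℂ) * Complex.exp (Real.pi * σ * Complex.I)) *
           (((s ^ σ : ℝ) : ℂ) + (l : ℂ) * Complex.exp (-(Real.pi * σ * Complex.I)))))
      = ((∫ s in Set.Ioi (0 : ℝ), s ^ (σ - 1) / ((s ^ σ + l * Real.cos (Real.pi * σ))^2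
            + (l * Real.sin (Real.pi * σ))^2) : ℝ) : ℂ) := by
    simp only [hint]
    exact integral_ofReal
  rw [hrw, real_integral σ l ⟨hσ0, hσ1⟩ hl]
  have hπ : Real.pi ≠ 0 := Real.pi_ne_zero
  rw [← Complex.ofReal_mul, ← Complex.ofReal_one, ← Complex.ofReal_div]
  congr 1
  field_simp
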